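/- Let r ≥ 3 and n ≥ 8r², and let G be an r-partite graph on parts (V_1,...,V_r) of size n with minimum cross-degree at least (1 − 1/(8r²))n. Fix j ∈ [r], a vertex v ∈ V_j, vertices u_i ∈ V_i ∩ N(v) for each i ≠ j, and a vertex v' ∈ V_j ∖ {v}. Let H be the set of transversal cliques A = {a_1,...,a_r}∖{a_j} (one vertex a_i ∈ V_i for each i ≠ j) such that G[A] is a clique, each a_i is adjacent to u_{i'} for all i' ≠ i (i' ≠ j), and each a_i is adjacent to both v and v'. Then |H| ≥ k_{[r]∖{j}}(G)/2 ≥ k_{[r]}(G)/(2n). -/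

import Mathlib

open Finset
open scoped Classical

/-- The set of cliques of `G` having exactly one vertex in part `V_i` for each `i ∈ I`. -/
noncomputable def partCliques {V : Type*} [Fintype V] [DecidableEq V] {r : ℕ}
    (G : SimpleGraph V) (P : V → Fin r) (I : Finset (Fin r)) : Finset (Finset V) :=
  Finset.univ.filter fun S => G.IsClique (S : Set V) ∧ S.image P = I ∧ S.card = I.card

section aux

variable {V : Type*} [Fintype V] [DecidableEq V] {r n : ℕ}
  {G : SimpleGraph V} {P : V → Fin r}

lemma mem_partCliques {I : Finset (Fin r)} {A : Finset V} :
    A ∈ partCliques G P I ↔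
      G.IsClique (A : Set V) ∧ A.image P = I ∧ A.card = I.card := by
  simp [partCliques]

lemma injOn_of_mem_partCliques {I : Finset (Fin r)} {A : Finset V}
    (hA : A ∈ partCliques G P I) : Set.InjOn P (A : Set V) := by
  obtain ⟨-, h1, h2⟩ := mem_partCliques.1 hA
  rw [← Finset.card_image_iff, h1, h2]

lemma filter_card_one_of_mem_partCliques {I : Finset (Fin r)} {A : Finset V}
    (hA : A ∈ partCliques G P I) {i : Fin r} (hi : i ∈ I) :
    (A.filter fun x => P x = i).card = 1 := by
  obtain ⟨hc, himg, hcard⟩ := mem_partCliques.1 hA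
  have hinj := injOn_of_mem_partCliques hA
  rw [Finset.card_eq_one]
  rw [← himg] at hi
  obtain ⟨x, hx, hPx⟩ := Finset.mem_image.1 hi
  refine ⟨x, ?_⟩
  ext y
  simp only [Finset.mem_filter, Finset.mem_singleton]
  constructor
  · rintro ⟨hy, hPy⟩
    exact hinj hy hx (hPy.trans hPx.symm)
  · rintro rfl; exact ⟨hx, hPx⟩

lemma erase_mem_partCliques {I : Finset (Fin r)} {A : Finset V}
    (hA : A ∈ partCliques G P I) {x : V} (hx : x ∈ A) :
    A.erase x ∈ partCliques G P (I.erase (P x)) := by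
  obtain ⟨hc, himg, hcard⟩ := mem_partCliques.1 hA
  have hinj := injOn_of_mem_partCliques hA
  have hPx : P x ∈ I := himg ▸ Finset.mem_image_of_mem P hx
  rw [mem_partCliques]
  refine ⟨hc.subset (Finset.coe_subset.2 (Finset.erase_subset _ _)), ?_, ?_⟩
  · ext i
    simp only [Finset.mem_image, Finset.mem_erase]
    constructor
    · rintro ⟨y, ⟨hyx, hyA⟩, rfl⟩
      exact ⟨fun h => hyx (hinj hyA hx h), himg ▸ Finset.mem_image_of_mem P hyA⟩
    · rintro ⟨hne, hi⟩
      rw [← himg] at hi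
      obtain ⟨y, hy, rfl⟩ := Finset.mem_image.1 hi
      exact ⟨y, ⟨fun h => hne (by rw [h]), hy⟩, rfl⟩
  · rw [Finset.card_erase_of_mem hx, Finset.card_erase_of_mem hPx, hcard]

lemma partCliques_insert_card_le
    (hsize : ∀ i : Fin r, (Finset.univ.filter fun v => P v = i).card = n)
    {i : Fin r} {I : Finset (Fin r)} (hi : i ∉ I) :
    (partCliques G P (insert i I)).card ≤ n * (partCliques G P I).card := by
  classical
  set s := partCliques G P (insert i I) with hs
  have hmaps : ∀ A ∈ s, (A.filter fun a => P a ≠ i) ∈ partCliques G P I := by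
    intro A hA
    obtain ⟨hc, himg, hcard⟩ := mem_partCliques.1 hA
    rw [mem_partCliques]
    refine ⟨hc.subset (Finset.coe_subset.2 (Finset.filter_subset _ _)), ?_, ?_⟩
    · ext i'
      simp only [Finset.mem_image, Finset.mem_filter]
      constructor
      · rintro ⟨a, ⟨ha, hne⟩, rfl⟩
        have : P a ∈ insert i I := himg ▸ Finset.mem_image_of_mem P ha
        rcases Finset.mem_insert.1 this with h | h
        · exact absurd h hne
        · exact h
      · intro hi'
        have : i' ∈ A.image P := himg ▸ Finset.mem_insert_of_mem hi'
        obtain ⟨a, ha, rfl⟩ := Finset.mem_image.1 this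
        exact ⟨a, ⟨ha, fun h => hi (h ▸ hi')⟩, rfl⟩
    · have h1 := filter_card_one_of_mem_partCliques hA (Finset.mem_insert_self i I)
      have h2 := Finset.card_filter_add_card_filter_not (s := A)
        (p := fun a => P a = i)
      rw [h1, hcard, Finset.card_insert_of_notMem hi] at h2
      simp only [ne_eq]
      omega
  have hfib : ∀ B ∈ s.image (fun A => A.filter fun a => P a ≠ i),
      (s.filter fun A => (A.filter fun a => P a ≠ i) = B).card ≤ n := by
    intro B _
    have := Finset.card_le_card_of_injOn (f := fun A => A.filter fun a => P a = i)
      (s := s.filter fun A => (A.filter fun a => P a ≠ i) = B)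
      (t := (Finset.univ.filter fun x => P x = i).image ({·}))
      ?_ ?_
    · calc (s.filter fun A => (A.filter fun a => P a ≠ i) = B).card
          ≤ ((Finset.univ.filter fun x => P x = i).image ({·})).card := this
        _ ≤ (Finset.univ.filter fun x => P x = i).card := Finset.card_image_le
        _ = n := hsize i
    · intro A hA
      rw [Finset.mem_coe, Finset.mem_filter] at hA
      have h1 := filter_card_one_of_mem_partCliques hA.1 (Finset.mem_insert_self i I)
      obtain ⟨x, hx⟩ := Finset.card_eq_one.1 h1
      have hxmem : x ∈ A.filter fun a => P a = i := hx ▸ Finset.mem_singleton_self x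
      rw [Finset.mem_filter] at hxmem
      simp only [hx]
      exact Finset.mem_image_of_mem _ (Finset.mem_filter.2 ⟨Finset.mem_univ x, hxmem.2⟩)
    · intro A hA A' hA' heq
      simp only [Finset.coe_filter, Set.mem_setOf_eq] at hA hA'
      have key : ∀ C : Finset V, (C.filter fun a => P a = i) ∪
          (C.filter fun a => P a ≠ i) = C := fun C =>
        Finset.filter_union_filter_not_eq (p := fun a => P a = i) C
      have heq' : (A.filter fun a => P a = i) = (A'.filter fun a => P a = i) := heq
      calc A = (A.filter fun a => P a = i) ∪ (A.filter fun a => P a ≠ i) := (key A).symm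
        _ = (A'.filter fun a => P a = i) ∪ (A'.filter fun a => P a ≠ i) := by
            rw [heq', hA.2, hA'.2]
        _ = A' := key A'
  calc s.card ≤ n * (s.image (fun A => A.filter fun a => P a ≠ i)).card :=
        Finset.card_le_mul_card_image s n hfib
    _ ≤ n * (partCliques G P I).card := by
        apply Nat.mul_le_mul_left
        apply Finset.card_le_card
        intro B hB
        obtain ⟨A, hA, rfl⟩ := Finset.mem_image.1 hB
        exact hmaps A hA

lemma partCliques_card_le_pow
    (hsize : ∀ i : Fin r, (Finset.univ.filter fun v => P v = i).card = n)
    (I : Finset (Fin r)) :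
    (partCliques G P I).card ≤ n ^ I.card := by
  classical
  induction I using Finset.induction_on with
  | empty =>
      simp only [Finset.card_empty, pow_zero]
      apply Finset.card_le_one.2
      intro A hA B hB
      obtain ⟨-, hA, -⟩ := mem_partCliques.1 hA
      obtain ⟨-, hB, -⟩ := mem_partCliques.1 hB
      rw [Finset.image_eq_empty.1 hA, Finset.image_eq_empty.1 hB]
  | @insert i I hi IH =>
      calc (partCliques G P (insert i I)).card ≤ n * (partCliques G P I).card :=
            partCliques_insert_card_le hsize hi
        _ ≤ n * n ^ I.card := Nat.mul_le_mul_left n IH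
        _ = n ^ (insert i I).card := by
            rw [Finset.card_insert_of_notMem hi, pow_succ, mul_comm]

lemma partCliques_through_card_le
    (hsize : ∀ i : Fin r, (Finset.univ.filter fun v => P v = i).card = n)
    {I : Finset (Fin r)} {x : V} (hx : P x ∈ I) :
    ((partCliques G P I).filter fun A => x ∈ A).card ≤ n ^ (I.card - 1) := by
  classical
  have hmaps : ∀ A ∈ (partCliques G P I).filter fun A => x ∈ A,
      A.erase x ∈ partCliques G P (I.erase (P x)) := by
    intro A hA
    rw [Finset.mem_filter] at hA
    exact erase_mem_partCliques hA.1 hA.2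
  have hinj : Set.InjOn (fun A : Finset V => A.erase x)
      ((partCliques G P I).filter fun A => x ∈ A) := by
    intro A hA A' hA' heq
    simp only [Finset.coe_filter, Set.mem_setOf_eq] at hA hA'
    have heq' : A.erase x = A'.erase x := heq
    rw [← Finset.insert_erase hA.2, ← Finset.insert_erase hA'.2, heq']
  calc ((partCliques G P I).filter fun A => x ∈ A).card
      ≤ (partCliques G P (I.erase (P x))).card :=
        Finset.card_le_card_of_injOn _ hmaps hinj
    _ ≤ n ^ (I.erase (P x)).card := partCliques_card_le_pow hsize _
    _ = n ^ (I.card - 1) := by rw [Finset.card_erase_of_mem hx]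

lemma nonadj_card_le
    (hsize : ∀ i : Fin r, (Finset.univ.filter fun v => P v = i).card = n)
    (hdeg : ∀ (ℓ : Fin r) (x : V), P x ≠ ℓ →
      (1 - 1 / (8 * (r : ℝ) ^ 2)) * n ≤
        ((Finset.univ.filter fun y => P y = ℓ ∧ G.Adj x y).card : ℝ))
    (hr : 3 ≤ r)
    {w : V} {i : Fin r} (hwi : P w ≠ i) :
    (((Finset.univ.filter fun x => P x = i ∧ ¬ G.Adj w x)).card : ℝ)
      ≤ (n : ℝ) / (8 * (r : ℝ) ^ 2) := by
  have hR : (3 : ℝ) ≤ (r : ℝ) := by exact_mod_cast hr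
  have hR2 : (0 : ℝ) < 8 * (r : ℝ) ^ 2 := by nlinarith
  have hsplit :
      (Finset.univ.filter fun x => P x = i ∧ G.Adj w x).card +
        (Finset.univ.filter fun x => P x = i ∧ ¬ G.Adj w x).card = n := by
    have h1 : (Finset.univ.filter fun x => P x = i ∧ G.Adj w x) =
        (Finset.univ.filter fun x => P x = i).filter fun x => G.Adj w x := by
      rw [Finset.filter_filter]
    have h2 : (Finset.univ.filter fun x => P x = i ∧ ¬ G.Adj w x) =
        (Finset.univ.filter fun x => P x = i).filter fun x => ¬ G.Adj w x := by
      rw [Finset.filter_filter]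
    rw [h1, h2, Finset.card_filter_add_card_filter_not, hsize]
  have hd := hdeg i w hwi
  have hcast : ((Finset.univ.filter fun x => P x = i ∧ G.Adj w x).card : ℝ) +
      ((Finset.univ.filter fun x => P x = i ∧ ¬ G.Adj w x).card : ℝ) = (n : ℝ) := by
    exact_mod_cast hsplit
  have key : (1 - 1 / (8 * (r : ℝ) ^ 2)) * n = (n : ℝ) - (n : ℝ) / (8 * (r : ℝ) ^ 2) := by
    ring
  linarith

lemma partCliques_lower
    (hsize : ∀ i : Fin r, (Finset.univ.filter fun v => P v = i).card = n)
    (hdeg : ∀ (ℓ : Fin r) (x : V), P x ≠ ℓ →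
      (1 - 1 / (8 * (r : ℝ) ^ 2)) * n ≤
        ((Finset.univ.filter fun y => P y = ℓ ∧ G.Adj x y).card : ℝ))
    (hr : 3 ≤ r)
    (I : Finset (Fin r)) :
    ((n : ℝ) - (r : ℝ) * ((n : ℝ) / (8 * (r : ℝ) ^ 2))) ^ I.card
      ≤ ((partCliques G P I).card : ℝ) := by
  classical
  have hR : (3 : ℝ) ≤ (r : ℝ) := by exact_mod_cast hr
  have hR2 : (0 : ℝ) < 8 * (r : ℝ) ^ 2 := by nlinarith
  have hN0 : (0 : ℝ) ≤ (n : ℝ) := Nat.cast_nonneg n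
  set c : ℝ := (n : ℝ) - (r : ℝ) * ((n : ℝ) / (8 * (r : ℝ) ^ 2)) with hc
  have hc0 : 0 ≤ c := by
    have h1 : (r : ℝ) * ((n : ℝ) / (8 * (r : ℝ) ^ 2)) = (n : ℝ) / (8 * (r : ℝ)) := by
      field_simp
    have h2 : (n : ℝ) / (8 * (r : ℝ)) ≤ (n : ℝ) := by
      apply div_le_self hN0
      nlinarith
    rw [hc, h1]
    linarith
  induction I using Finset.induction_on with
  | empty =>
      simp only [Finset.card_empty, pow_zero]
      have : (∅ : Finset V) ∈ partCliques G P ∅ := by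
        rw [mem_partCliques]
        refine ⟨by simp, by simp, by simp⟩
      have h1 : 1 ≤ (partCliques G P (∅ : Finset (Fin r))).card :=
        Finset.card_pos.2 ⟨∅, this⟩
      exact_mod_cast h1
  | @insert i I hi IH =>
      set ext : Finset V → Finset V :=
        fun A => Finset.univ.filter fun x => P x = i ∧ ∀ a ∈ A, G.Adj x a with hext
      have claim1 : ∀ A ∈ partCliques G P I, c ≤ ((ext A).card : ℝ) := by
        intro A hA
        obtain ⟨hcl, himg, hcard⟩ := mem_partCliques.1 hA
        have hsplit : (ext A).card +
            ((Finset.univ.filter fun x => P x = i).filter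
              fun x => ¬ ∀ a ∈ A, G.Adj x a).card = n := by
          have h1 : ext A = (Finset.univ.filter fun x => P x = i).filter
              fun x => ∀ a ∈ A, G.Adj x a := by
            rw [hext, Finset.filter_filter]
          rw [h1, Finset.card_filter_add_card_filter_not, hsize]
        have hbadsub : (Finset.univ.filter fun x => P x = i).filter
            (fun x => ¬ ∀ a ∈ A, G.Adj x a) ⊆
            A.biUnion fun a => Finset.univ.filter fun x => P x = i ∧ ¬ G.Adj a x := by
          intro x hx
          simp only [Finset.mem_filter, Finset.mem_univ, true_and] at hx
          push_neg at hx
          rcases hx.2 with ⟨a, ha, hna⟩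
          refine Finset.mem_biUnion.2 ⟨a, ha, ?_⟩
          simp only [Finset.mem_filter, Finset.mem_univ, true_and]
          exact ⟨hx.1, fun h => hna h.symm⟩
        have hbad : (((Finset.univ.filter fun x => P x = i).filter
            fun x => ¬ ∀ a ∈ A, G.Adj x a).card : ℝ)
            ≤ (r : ℝ) * ((n : ℝ) / (8 * (r : ℝ) ^ 2)) := by
          have h1 := Finset.card_le_card hbadsub
          have h2 := Finset.card_biUnion_le (s := A)
            (t := fun a => Finset.univ.filter fun x => P x = i ∧ ¬ G.Adj a x)
          have h3 : ∀ a ∈ A, ((Finset.univ.filter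
              fun x => P x = i ∧ ¬ G.Adj a x).card : ℝ)
              ≤ (n : ℝ) / (8 * (r : ℝ) ^ 2) := by
            intro a ha
            apply nonadj_card_le hsize hdeg hr
            intro h
            apply hi
            rw [← h, ← himg]
            exact Finset.mem_image_of_mem P ha
          calc (((Finset.univ.filter fun x => P x = i).filter
              fun x => ¬ ∀ a ∈ A, G.Adj x a).card : ℝ)
              ≤ ((A.biUnion fun a => Finset.univ.filter
                  fun x => P x = i ∧ ¬ G.Adj a x).card : ℝ) := by exact_mod_cast h1
            _ ≤ ((∑ a ∈ A, (Finset.univ.filter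
                  fun x => P x = i ∧ ¬ G.Adj a x).card : ℕ) : ℝ) := by exact_mod_cast h2
            _ = ∑ a ∈ A, (((Finset.univ.filter
                  fun x => P x = i ∧ ¬ G.Adj a x).card : ℕ) : ℝ) := by push_cast; ring
            _ ≤ ∑ _a ∈ A, (n : ℝ) / (8 * (r : ℝ) ^ 2) := Finset.sum_le_sum h3
            _ = (A.card : ℝ) * ((n : ℝ) / (8 * (r : ℝ) ^ 2)) := by
                rw [Finset.sum_const, nsmul_eq_mul]
            _ ≤ (r : ℝ) * ((n : ℝ) / (8 * (r : ℝ) ^ 2)) := by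
                apply mul_le_mul_of_nonneg_right
                · have : A.card ≤ r := by
                    calc A.card = I.card := hcard
                      _ ≤ (Finset.univ : Finset (Fin r)).card := Finset.card_le_univ I
                      _ = r := by simp
                  exact_mod_cast this
                · positivity
        have hcast : ((ext A).card : ℝ) +
            (((Finset.univ.filter fun x => P x = i).filter
              fun x => ¬ ∀ a ∈ A, G.Adj x a).card : ℝ) = (n : ℝ) := by
          exact_mod_cast hsplit
        rw [hc]
        linarith
      have claim2 : ((partCliques G P I).card : ℝ) * c
          ≤ ((partCliques G P (insert i I)).card : ℝ) := by
        have hnotmem : ∀ A ∈ partCliques G P I, ∀ x ∈ ext A, x ∉ A := by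
          intro A hA x hx hxA
          obtain ⟨-, himg, -⟩ := mem_partCliques.1 hA
          simp only [hext, Finset.mem_filter, Finset.mem_univ, true_and] at hx
          exact hi (hx.1 ▸ (himg ▸ Finset.mem_image_of_mem P hxA))
        have hfilter : ∀ A ∈ partCliques G P I, ∀ x ∈ ext A,
            ((insert x A).filter fun a => ¬ P a = i) = A := by
          intro A hA x hx
          obtain ⟨-, himg, -⟩ := mem_partCliques.1 hA
          simp only [hext, Finset.mem_filter, Finset.mem_univ, true_and] at hx
          ext a
          simp only [Finset.mem_filter, Finset.mem_insert]
          constructor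
          · rintro ⟨h1 | h1, h2⟩
            · exact absurd (h1 ▸ hx.1) h2
            · exact h1
          · intro ha
            refine ⟨Or.inr ha, fun h => hi ?_⟩
            rw [← h, ← himg]
            exact Finset.mem_image_of_mem P ha
        have hsub : (partCliques G P I).biUnion
            (fun A => (ext A).image fun x => insert x A) ⊆
            partCliques G P (insert i I) := by
          intro S hS
          obtain ⟨A, hA, hS⟩ := Finset.mem_biUnion.1 hS
          obtain ⟨x, hx, rfl⟩ := Finset.mem_image.1 hS
          obtain ⟨hcl, himg, hcard⟩ := mem_partCliques.1 hA
          have hxA : x ∉ A := hnotmem A hA x hx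
          simp only [hext, Finset.mem_filter, Finset.mem_univ, true_and] at hx
          rw [mem_partCliques]
          refine ⟨?_, ?_, ?_⟩
          · rw [Finset.coe_insert]
            refine hcl.insert fun b hb _ => ?_
            exact hx.2 b hb
          · rw [Finset.image_insert, himg, hx.1]
          · rw [Finset.card_insert_of_notMem hxA,
              Finset.card_insert_of_notMem hi, hcard]
        have hdisj : (partCliques G P I : Set (Finset V)).PairwiseDisjoint
            (fun A => (ext A).image fun x => insert x A) := by
          intro A hA A' hA' hne
          simp only [Finset.mem_coe] at hA hA'
          refine Finset.disjoint_left.2 fun S hS hS' => ?_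
          obtain ⟨x, hx, hSx⟩ := Finset.mem_image.1 hS
          obtain ⟨x', hx', hSx'⟩ := Finset.mem_image.1 hS'
          apply hne
          have e1 := hfilter A hA x hx
          have e2 := hfilter A' hA' x' hx'
          rw [hSx] at e1
          rw [hSx'] at e2
          rw [← e1, ← e2]
        have hcards : ∑ A ∈ partCliques G P I, ((ext A).image
            fun x => insert x A).card ≤ (partCliques G P (insert i I)).card := by
          rw [← Finset.card_biUnion]
          · exact Finset.card_le_card hsub
          · intro A hA A' hA' hne
            exact hdisj hA hA' hne
        have himgcard : ∀ A ∈ partCliques G P I,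
            ((ext A).image fun x => insert x A).card = (ext A).card := by
          intro A hA
          apply Finset.card_image_of_injOn
          intro x hx x' hx' heq
          have hxA : x ∉ A := hnotmem A hA x (Finset.mem_coe.1 hx)
          have hx'A : x' ∉ A := hnotmem A hA x' (Finset.mem_coe.1 hx')
          have heq' : insert x A = insert x' A := heq
          have : x ∈ insert x' A := by rw [← heq']; exact Finset.mem_insert_self x A
          rcases Finset.mem_insert.1 this with h | h
          · exact h
          · exact absurd h hxA
        calc ((partCliques G P I).card : ℝ) * c
            = ∑ _A ∈ partCliques G P I, c := by rw [Finset.sum_const, nsmul_eq_mul]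
          _ ≤ ∑ A ∈ partCliques G P I, ((ext A).card : ℝ) :=
              Finset.sum_le_sum claim1
          _ = ∑ A ∈ partCliques G P I, (((ext A).image
                fun x => insert x A).card : ℝ) := by
              apply Finset.sum_congr rfl
              intro A hA
              rw [himgcard A hA]
          _ = ((∑ A ∈ partCliques G P I, ((ext A).image
                fun x => insert x A).card : ℕ) : ℝ) := by push_cast; ring
          _ ≤ ((partCliques G P (insert i I)).card : ℝ) := by exact_mod_cast hcards
      rw [Finset.card_insert_of_notMem hi, pow_succ]
      calc c ^ I.card * c ≤ ((partCliques G P I).card : ℝ) * c :=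
            mul_le_mul_of_nonneg_right IH hc0
        _ ≤ ((partCliques G P (insert i I)).card : ℝ) := claim2

end aux

set_option maxHeartbeats 1000000 in
theorem stmt_10 {V : Type*} [Fintype V] [DecidableEq V] {r n : ℕ} (hr : 3 ≤ r)
    (hn : 8 * r ^ 2 ≤ n)
    (G : SimpleGraph V) (P : V → Fin r)
    (hpart : ∀ u v, G.Adj u v → P u ≠ P v)
    (hsize : ∀ i : Fin r, (Finset.univ.filter fun v => P v = i).card = n)
    (hdeg : ∀ (ℓ : Fin r) (x : V), P x ≠ ℓ →
      (1 - 1 / (8 * (r : ℝ) ^ 2)) * n ≤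
        ((Finset.univ.filter fun y => P y = ℓ ∧ G.Adj x y).card : ℝ))
    (j : Fin r) (v v' : V) (hv : P v = j) (hv' : P v' = j) (hvv' : v ≠ v')
    (u : Fin r → V)
    (hu : ∀ i, i ≠ j → P (u i) = i ∧ G.Adj v (u i) ∧ G.Adj v' (u i)) :
    ((partCliques G P Finset.univ).card : ℝ) / (2 * n) ≤
      ((partCliques G P (Finset.univ.erase j)).card : ℝ) / 2 ∧
    ((partCliques G P (Finset.univ.erase j)).card : ℝ) / 2 ≤
      ((Finset.univ.filter fun A : Finset V =>
          G.IsClique (A : Set V) ∧ A.card = r - 1 ∧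
          (∀ i : Fin r, i ≠ j → (A.filter fun x => P x = i).card = 1) ∧
          (∀ x ∈ A, G.Adj v x ∧ G.Adj v' x) ∧
          (∀ x ∈ A, ∀ i : Fin r, i ≠ j → i ≠ P x → G.Adj x (u i))).card : ℝ) := by
  classical
  have hR : (3 : ℝ) ≤ (r : ℝ) := by exact_mod_cast hr
  have hR2 : (0 : ℝ) < 8 * (r : ℝ) ^ 2 := by nlinarith
  have hnR : (8 : ℝ) * (r : ℝ) ^ 2 ≤ (n : ℝ) := by exact_mod_cast hn
  have hN0 : (0 : ℝ) < (n : ℝ) := by nlinarith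
  have hjU : j ∈ (Finset.univ : Finset (Fin r)) := Finset.mem_univ j
  have hIcard : ((Finset.univ : Finset (Fin r)).erase j).card = r - 1 := by
    rw [Finset.card_erase_of_mem hjU, Finset.card_univ, Fintype.card_fin]
  constructor
  · -- Part A
    have hA1 : (partCliques G P (Finset.univ : Finset (Fin r))).card ≤
        n * (partCliques G P ((Finset.univ : Finset (Fin r)).erase j)).card := by
      have h := partCliques_insert_card_le (G := G) hsize
        (i := j) (I := (Finset.univ : Finset (Fin r)).erase j) (Finset.notMem_erase j _)
      rwa [Finset.insert_erase hjU] at h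
    have hA1' : ((partCliques G P (Finset.univ : Finset (Fin r))).card : ℝ) ≤
        (n : ℝ) * ((partCliques G P ((Finset.univ : Finset (Fin r)).erase j)).card : ℝ) := by
      exact_mod_cast hA1
    rw [div_le_div_iff₀ (by positivity) (by norm_num)]
    nlinarith
  · -- Part B
    set pc := partCliques G P ((Finset.univ : Finset (Fin r)).erase j) with hpc
    set p : Finset V → Prop := fun A =>
      (∀ x ∈ A, G.Adj v x ∧ G.Adj v' x) ∧
      (∀ x ∈ A, ∀ i : Fin r, i ≠ j → i ≠ P x → G.Adj x (u i)) with hp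
    have hsplitB : (pc.filter p).card + (pc.filter fun A => ¬ p A).card = pc.card :=
      Finset.card_filter_add_card_filter_not p
    -- the good cliques are in H
    have hGood : (pc.filter p).card ≤
        ((Finset.univ.filter fun A : Finset V =>
          G.IsClique (A : Set V) ∧ A.card = r - 1 ∧
          (∀ i : Fin r, i ≠ j → (A.filter fun x => P x = i).card = 1) ∧
          (∀ x ∈ A, G.Adj v x ∧ G.Adj v' x) ∧
          (∀ x ∈ A, ∀ i : Fin r, i ≠ j → i ≠ P x → G.Adj x (u i))).card) := by
      apply Finset.card_le_card
      intro A hA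
      rw [Finset.mem_filter] at hA
      obtain ⟨hApc, hpA⟩ := hA
      rw [hp] at hpA
      obtain ⟨hcl, himg, hcard⟩ := mem_partCliques.1 hApc
      refine Finset.mem_filter.2 ⟨Finset.mem_univ A, hcl, ?_, ?_, hpA.1, hpA.2⟩
      · rw [hcard, hIcard]
      · intro i hij
        exact filter_card_one_of_mem_partCliques hApc
          (Finset.mem_erase.2 ⟨hij, Finset.mem_univ i⟩)
    -- the bad cliques
    set W : Finset V :=
      insert v (insert v' (((Finset.univ : Finset (Fin r)).erase j).image u)) with hW
    have hWcard : W.card ≤ r + 1 := by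
      calc W.card ≤ (insert v' (((Finset.univ : Finset (Fin r)).erase j).image u)).card + 1 :=
            Finset.card_insert_le _ _
        _ ≤ (((Finset.univ : Finset (Fin r)).erase j).image u).card + 1 + 1 := by
            have := Finset.card_insert_le v'
              (((Finset.univ : Finset (Fin r)).erase j).image u)
            omega
        _ ≤ (r - 1) + 1 + 1 := by
            have h1 := Finset.card_image_le
              (s := ((Finset.univ : Finset (Fin r)).erase j)) (f := u)
            rw [hIcard] at h1
            omega
        _ ≤ r + 1 := by omega
    set Xw : V → Finset V := fun w =>
      Finset.univ.filter fun x => P x ≠ j ∧ P x ≠ P w ∧ ¬ G.Adj w x with hXw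
    have hbadsub : pc.filter (fun A => ¬ p A) ⊆
        W.biUnion fun w => (Xw w).biUnion fun x => pc.filter fun A => x ∈ A := by
      intro A hA
      rw [Finset.mem_filter] at hA
      obtain ⟨hApc, hnp⟩ := hA
      obtain ⟨-, himg, -⟩ := mem_partCliques.1 hApc
      have hPxA : ∀ x ∈ A, P x ≠ j := by
        intro x hx
        have : P x ∈ (Finset.univ : Finset (Fin r)).erase j :=
          himg ▸ Finset.mem_image_of_mem P hx
        exact (Finset.mem_erase.1 this).1
      rw [hp] at hnp
      have hwit : ∃ w ∈ W, ∃ x ∈ A, P x ≠ j ∧ P x ≠ P w ∧ ¬ G.Adj w x := by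
        rcases not_and_or.1 hnp with h | h
        · push_neg at h
          obtain ⟨x, hx, hxx⟩ := h
          by_cases hvx : G.Adj v x
          · exact ⟨v', Finset.mem_insert_of_mem (Finset.mem_insert_self _ _), x, hx,
              hPxA x hx, by rw [hv']; exact hPxA x hx, hxx hvx⟩
          · exact ⟨v, Finset.mem_insert_self _ _, x, hx, hPxA x hx,
              by rw [hv]; exact hPxA x hx, hvx⟩
        · push_neg at h
          obtain ⟨x, hx, i, hij, hiPx, hna⟩ := h
          refine ⟨u i, ?_, x, hx, hPxA x hx, ?_, fun hadj => hna hadj.symm⟩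
          · exact Finset.mem_insert_of_mem (Finset.mem_insert_of_mem
              (Finset.mem_image_of_mem u (Finset.mem_erase.2 ⟨hij, Finset.mem_univ i⟩)))
          · rw [(hu i hij).1]; exact fun h => hiPx h.symm
      obtain ⟨w, hw, x, hxA, h1, h2, h3⟩ := hwit
      refine Finset.mem_biUnion.2 ⟨w, hw, Finset.mem_biUnion.2 ⟨x, ?_, ?_⟩⟩
      · show x ∈ Finset.univ.filter fun x => P x ≠ j ∧ P x ≠ P w ∧ ¬ G.Adj w x
        exact Finset.mem_filter.2 ⟨Finset.mem_univ x, h1, h2, h3⟩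
      · exact Finset.mem_filter.2 ⟨hApc, hxA⟩
    have hthrough : ∀ x : V, P x ≠ j → (pc.filter fun A => x ∈ A).card ≤ n ^ (r - 2) := by
      intro x hx
      have h := partCliques_through_card_le (G := G) hsize
        (I := (Finset.univ : Finset (Fin r)).erase j) (x := x)
        (Finset.mem_erase.2 ⟨hx, Finset.mem_univ _⟩)
      rw [hIcard] at h
      have : r - 1 - 1 = r - 2 := by omega
      rwa [this] at h
    have hXwcard : ∀ w : V, ((Xw w).card : ℝ) ≤ (r : ℝ) * ((n : ℝ) / (8 * (r : ℝ) ^ 2)) := by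
      intro w
      have hsub : Xw w ⊆ ((Finset.univ : Finset (Fin r)).erase (P w)).biUnion
          fun i => Finset.univ.filter fun x => P x = i ∧ ¬ G.Adj w x := by
        intro x hx
        rw [hXw] at hx
        simp only [Finset.mem_filter, Finset.mem_univ, true_and] at hx
        exact Finset.mem_biUnion.2 ⟨P x, Finset.mem_erase.2 ⟨hx.2.1, Finset.mem_univ _⟩,
          Finset.mem_filter.2 ⟨Finset.mem_univ _, rfl, hx.2.2⟩⟩
      have h1 := Finset.card_le_card hsub
      have h2 := Finset.card_biUnion_le
        (s := (Finset.univ : Finset (Fin r)).erase (P w))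
        (t := fun i => Finset.univ.filter fun x => P x = i ∧ ¬ G.Adj w x)
      have h3 : ∀ i ∈ (Finset.univ : Finset (Fin r)).erase (P w),
          ((Finset.univ.filter fun x => P x = i ∧ ¬ G.Adj w x).card : ℝ)
          ≤ (n : ℝ) / (8 * (r : ℝ) ^ 2) := by
        intro i hi
        exact nonadj_card_le hsize hdeg hr (fun h => (Finset.mem_erase.1 hi).1 h.symm)
      calc ((Xw w).card : ℝ)
          ≤ ((∑ i ∈ (Finset.univ : Finset (Fin r)).erase (P w),
              (Finset.univ.filter fun x => P x = i ∧ ¬ G.Adj w x).card : ℕ) : ℝ) := by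
            exact_mod_cast le_trans h1 h2
        _ = ∑ i ∈ (Finset.univ : Finset (Fin r)).erase (P w),
              (((Finset.univ.filter fun x => P x = i ∧ ¬ G.Adj w x).card : ℕ) : ℝ) := by
            push_cast; ring
        _ ≤ ∑ _i ∈ (Finset.univ : Finset (Fin r)).erase (P w),
              (n : ℝ) / (8 * (r : ℝ) ^ 2) := Finset.sum_le_sum h3
        _ = (((Finset.univ : Finset (Fin r)).erase (P w)).card : ℝ) *
              ((n : ℝ) / (8 * (r : ℝ) ^ 2)) := by rw [Finset.sum_const, nsmul_eq_mul]
        _ ≤ (r : ℝ) * ((n : ℝ) / (8 * (r : ℝ) ^ 2)) := by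
            apply mul_le_mul_of_nonneg_right
            · have : ((Finset.univ : Finset (Fin r)).erase (P w)).card ≤ r := by
                rw [Finset.card_erase_of_mem (Finset.mem_univ _), Finset.card_univ,
                  Fintype.card_fin]
                omega
              exact_mod_cast this
            · positivity
    have hBad : ((pc.filter fun A => ¬ p A).card : ℝ) ≤
        ((r : ℝ) + 1) * ((r : ℝ) * ((n : ℝ) / (8 * (r : ℝ) ^ 2)) * (n : ℝ) ^ (r - 2)) := by
      have step1 : (pc.filter fun A => ¬ p A).card ≤
          ∑ w ∈ W, ∑ x ∈ Xw w, (pc.filter fun A => x ∈ A).card := by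
        calc (pc.filter fun A => ¬ p A).card
            ≤ (W.biUnion fun w => (Xw w).biUnion fun x =>
                pc.filter fun A => x ∈ A).card := Finset.card_le_card hbadsub
          _ ≤ ∑ w ∈ W, ((Xw w).biUnion fun x => pc.filter fun A => x ∈ A).card :=
              Finset.card_biUnion_le
          _ ≤ ∑ w ∈ W, ∑ x ∈ Xw w, (pc.filter fun A => x ∈ A).card :=
              Finset.sum_le_sum fun w _ => Finset.card_biUnion_le
      have step2 : ∀ w : V, ((∑ x ∈ Xw w, (pc.filter fun A => x ∈ A).card : ℕ) : ℝ) ≤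
          (r : ℝ) * ((n : ℝ) / (8 * (r : ℝ) ^ 2)) * (n : ℝ) ^ (r - 2) := by
        intro w
        have hx2 : ∀ x ∈ Xw w, ((pc.filter fun A => x ∈ A).card : ℝ) ≤ ((n : ℝ)) ^ (r - 2) := by
          intro x hx
          rw [hXw] at hx
          simp only [Finset.mem_filter, Finset.mem_univ, true_and] at hx
          have := hthrough x hx.1
          calc ((pc.filter fun A => x ∈ A).card : ℝ) ≤ ((n ^ (r - 2) : ℕ) : ℝ) := by
                exact_mod_cast this
            _ = ((n : ℝ)) ^ (r - 2) := by push_cast; ring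
        calc ((∑ x ∈ Xw w, (pc.filter fun A => x ∈ A).card : ℕ) : ℝ)
            = ∑ x ∈ Xw w, (((pc.filter fun A => x ∈ A).card : ℕ) : ℝ) := by push_cast; ring
          _ ≤ ∑ _x ∈ Xw w, ((n : ℝ)) ^ (r - 2) := Finset.sum_le_sum hx2
          _ = ((Xw w).card : ℝ) * ((n : ℝ)) ^ (r - 2) := by
              rw [Finset.sum_const, nsmul_eq_mul]
          _ ≤ (r : ℝ) * ((n : ℝ) / (8 * (r : ℝ) ^ 2)) * (n : ℝ) ^ (r - 2) :=
              mul_le_mul_of_nonneg_right (hXwcard w) (by positivity)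
      calc ((pc.filter fun A => ¬ p A).card : ℝ)
          ≤ ((∑ w ∈ W, ∑ x ∈ Xw w, (pc.filter fun A => x ∈ A).card : ℕ) : ℝ) := by
            exact_mod_cast step1
        _ = ∑ w ∈ W, ((∑ x ∈ Xw w, (pc.filter fun A => x ∈ A).card : ℕ) : ℝ) := by
            push_cast; ring
        _ ≤ ∑ _w ∈ W, (r : ℝ) * ((n : ℝ) / (8 * (r : ℝ) ^ 2)) * (n : ℝ) ^ (r - 2) :=
            Finset.sum_le_sum fun w _ => step2 w
        _ = (W.card : ℝ) * ((r : ℝ) * ((n : ℝ) / (8 * (r : ℝ) ^ 2)) * (n : ℝ) ^ (r - 2)) := by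
            rw [Finset.sum_const, nsmul_eq_mul]
        _ ≤ ((r : ℝ) + 1) * ((r : ℝ) * ((n : ℝ) / (8 * (r : ℝ) ^ 2)) * (n : ℝ) ^ (r - 2)) := by
            apply mul_le_mul_of_nonneg_right
            · have : (W.card : ℝ) ≤ ((r + 1 : ℕ) : ℝ) := by exact_mod_cast hWcard
              push_cast at this
              linarith
            · positivity
    -- numeric endgame
    have hpowsucc : (n : ℝ) ^ (r - 2) * (n : ℝ) = (n : ℝ) ^ (r - 1) := by
      rw [← pow_succ]
      congr 1
      omega
    have hXpos : (0 : ℝ) ≤ (n : ℝ) ^ (r - 1) := by positivity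
    have hbnd : ((r : ℝ) + 1) * ((r : ℝ) * ((n : ℝ) / (8 * (r : ℝ) ^ 2)) * (n : ℝ) ^ (r - 2))
        ≤ (n : ℝ) ^ (r - 1) / 4 := by
      have h1 : ((r : ℝ) + 1) * ((r : ℝ) * ((n : ℝ) / (8 * (r : ℝ) ^ 2))) ≤ (n : ℝ) / 4 := by
        have e1 : ((r : ℝ) + 1) * ((r : ℝ) * ((n : ℝ) / (8 * (r : ℝ) ^ 2))) =
            (((r : ℝ) + 1) * (r : ℝ) / (8 * (r : ℝ) ^ 2)) * (n : ℝ) := by ring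
        have e2 : ((r : ℝ) + 1) * (r : ℝ) / (8 * (r : ℝ) ^ 2) ≤ 1 / 4 := by
          rw [div_le_div_iff₀ hR2 (by norm_num : (0:ℝ) < 4)]
          nlinarith
        rw [e1]
        calc (((r : ℝ) + 1) * (r : ℝ) / (8 * (r : ℝ) ^ 2)) * (n : ℝ)
            ≤ (1 / 4) * (n : ℝ) := mul_le_mul_of_nonneg_right e2 (le_of_lt hN0)
          _ = (n : ℝ) / 4 := by ring
      calc ((r : ℝ) + 1) * ((r : ℝ) * ((n : ℝ) / (8 * (r : ℝ) ^ 2)) * (n : ℝ) ^ (r - 2))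
          = ((r : ℝ) + 1) * ((r : ℝ) * ((n : ℝ) / (8 * (r : ℝ) ^ 2))) * (n : ℝ) ^ (r - 2) := by
            ring
        _ ≤ (n : ℝ) / 4 * (n : ℝ) ^ (r - 2) :=
            mul_le_mul_of_nonneg_right h1 (by positivity)
        _ = (n : ℝ) ^ (r - 1) / 4 := by
            rw [div_mul_eq_mul_div, mul_comm, hpowsucc]
    have hlow : (7 / 8 : ℝ) * (n : ℝ) ^ (r - 1) ≤ (pc.card : ℝ) := by
      have h0 := partCliques_lower (G := G) hsize hdeg hr
        ((Finset.univ : Finset (Fin r)).erase j)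
      rw [hIcard] at h0
      have hRne : (r : ℝ) ≠ 0 := by linarith
      have hca : (n : ℝ) - (r : ℝ) * ((n : ℝ) / (8 * (r : ℝ) ^ 2)) =
          (n : ℝ) * (1 + -(1 / (8 * (r : ℝ)))) := by
        field_simp
        ring
      rw [hca, mul_pow] at h0
      have hb := one_add_mul_le_pow (a := -(1 / (8 * (r : ℝ))))
        (by
          have h1 : (1:ℝ) / (8 * (r : ℝ)) ≤ 1 := by
            rw [div_le_one (by positivity : (0:ℝ) < 8 * (r : ℝ))]
            linarith
          linarith) (r - 1)
      have hcast : ((r - 1 : ℕ) : ℝ) ≤ (r : ℝ) := by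
        have : (r - 1 : ℕ) ≤ r := Nat.sub_le r 1
        exact_mod_cast this
      have hkey : (r : ℝ) * (1 / (8 * (r : ℝ))) = 1 / 8 := by
        field_simp
      have h78 : (7 / 8 : ℝ) ≤ 1 + ((r - 1 : ℕ) : ℝ) * -(1 / (8 * (r : ℝ))) := by
        have hpos : (0:ℝ) ≤ 1 / (8 * (r : ℝ)) := by positivity
        have h5 : ((r - 1 : ℕ) : ℝ) * (1 / (8 * (r : ℝ))) ≤ (r : ℝ) * (1 / (8 * (r : ℝ))) :=
          mul_le_mul_of_nonneg_right hcast hpos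
        rw [hkey] at h5
        linarith
      have h2 : (7 / 8 : ℝ) ≤ (1 + -(1 / (8 * (r : ℝ)))) ^ (r - 1) := le_trans h78 hb
      calc (7 / 8 : ℝ) * (n : ℝ) ^ (r - 1)
          ≤ (1 + -(1 / (8 * (r : ℝ)))) ^ (r - 1) * (n : ℝ) ^ (r - 1) :=
            mul_le_mul_of_nonneg_right h2 hXpos
        _ = (n : ℝ) ^ (r - 1) * (1 + -(1 / (8 * (r : ℝ)))) ^ (r - 1) := by ring
        _ ≤ (pc.card : ℝ) := h0
    have hsplitR : ((pc.filter p).card : ℝ) + ((pc.filter fun A => ¬ p A).card : ℝ) =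
        (pc.card : ℝ) := by exact_mod_cast hsplitB
    have hGoodR : ((pc.filter p).card : ℝ) ≤
        ((Finset.univ.filter fun A : Finset V =>
          G.IsClique (A : Set V) ∧ A.card = r - 1 ∧
          (∀ i : Fin r, i ≠ j → (A.filter fun x => P x = i).card = 1) ∧
          (∀ x ∈ A, G.Adj v x ∧ G.Adj v' x) ∧
          (∀ x ∈ A, ∀ i : Fin r, i ≠ j → i ≠ P x → G.Adj x (u i))).card : ℝ) := by
      exact_mod_cast hGood
    linarith
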